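/- arXiv:2203.08188 — 2 statements merged into one kernel-verified Lean document; each statement's English description precedes it below -/
import Mathlib

section
/- Jacobi triple product identity: as formal power series, ∏_{j=1}^∞ (1 - q^j)(1 + u q^j)(1 + u^{-1} q^{j-1}) = ∑_{m ∈ ℤ} u^m q^{m(m+1)/2}. -/
open Finset

namespace JTP

/-- Partial q-Pochhammer product `∏_{j=1}^n (1 - q^j)`. -/
noncomputable def E (q : ℂ) (n : ℕ) : ℂ := ∏ j ∈ Finset.range n, (1 - q ^ (j + 1))

/-- Gaussian binomial coefficient as a complex number. -/
noncomputable def qbin (q : ℂ) (n k : ℕ) : ℂ :=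
  if k ≤ n then E q n / (E q k * E q (n - k)) else 0

lemma E_succ (q : ℂ) (n : ℕ) : E q (n + 1) = E q n * (1 - q ^ (n + 1)) :=
  Finset.prod_range_succ _ _

lemma E_zero (q : ℂ) : E q 0 = 1 := rfl

lemma one_sub_pow_ne_zero {q : ℂ} (hq : ‖q‖ < 1) (n : ℕ) : 1 - q ^ (n + 1) ≠ 0 := by
  intro h
  have h1 : q ^ (n + 1) = 1 := by linear_combination -h
  have : ‖q ^ (n + 1)‖ < 1 := by
    rw [norm_pow]
    exact pow_lt_one₀ (norm_nonneg q) hq (Nat.succ_ne_zero n)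
  rw [h1, norm_one] at this
  exact lt_irrefl _ this

lemma E_ne_zero {q : ℂ} (hq : ‖q‖ < 1) (n : ℕ) : E q n ≠ 0 :=
  Finset.prod_ne_zero_iff.mpr fun j _ => one_sub_pow_ne_zero hq j

lemma qbin_self (q : ℂ) (n : ℕ) (hq : ‖q‖ < 1) : qbin q n n = 1 := by
  simp [qbin, E_zero, div_self, E_ne_zero hq]

lemma qbin_zero (q : ℂ) (n : ℕ) (hq : ‖q‖ < 1) : qbin q n 0 = 1 := by
  simp [qbin, E_zero, div_self, E_ne_zero hq]

lemma qbin_of_gt (q : ℂ) {n k : ℕ} (h : n < k) : qbin q n k = 0 := by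
  simp [qbin, not_le.mpr h]

/-- q-Pascal recurrence. -/
lemma qbin_pascal {q : ℂ} (hq : ‖q‖ < 1) (n k : ℕ) :
    qbin q (n + 1) (k + 1) = qbin q n (k + 1) + q ^ (n - k) * qbin q n k := by
  rcases lt_or_ge n k with h | hkn
  · -- k ≥ n : cases k = n handled? here n < k so n+1 < k+1 unless k = n (excluded)
    rw [qbin_of_gt q (by omega : n + 1 < k + 1), qbin_of_gt q (by omega : n < k + 1),
      qbin_of_gt q h, mul_zero, add_zero]
  rcases eq_or_lt_of_le hkn with rfl | hlt
  · rw [qbin_self _ _ hq, qbin_of_gt q (by omega), zero_add, Nat.sub_self, pow_zero,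
      one_mul, qbin_self _ _ hq]
  -- now k + 1 ≤ n
  have h1 : k + 1 ≤ n := hlt
  rw [qbin, qbin, qbin, if_pos (by omega), if_pos h1, if_pos (by omega)]
  have e1 : n + 1 - (k + 1) = n - k := by omega
  have e2 : n - (k + 1) + 1 = n - k := by omega
  have e3 : n - k + k + 1 = n + 1 := by omega
  rw [e1, E_succ q n, ← e2, E_succ q (n - (k+1)), E_succ q k]
  have hEk := E_ne_zero hq k
  have hEk1 := E_ne_zero hq (n - (k+1))
  have hnz1 := one_sub_pow_ne_zero hq k
  have hnz2 := one_sub_pow_ne_zero hq (n - (k+1))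
  field_simp
  rw [e2]
  have hp : q ^ (n + 1) = q ^ (n - k) * q ^ (k + 1) := by
    rw [← pow_add]; congr 1; omega
  rw [hp]; ring

lemma tri_succ (k : ℕ) : (k + 1) * k / 2 = k * (k - 1) / 2 + k := by
  have h1 := Finset.sum_range_id_mul_two (k + 1)
  have h2 := Finset.sum_range_id_mul_two k
  rw [Finset.sum_range_succ] at h1
  simp only [Nat.add_sub_cancel] at h1
  omega

/-- q-binomial theorem. -/
lemma qbin_theorem {q : ℂ} (hq : ‖q‖ < 1) (y : ℂ) (n : ℕ) :
    ∏ j ∈ Finset.range n, (1 + y * q ^ j)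
      = ∑ k ∈ Finset.range (n + 1), qbin q n k * q ^ (k * (k - 1) / 2) * y ^ k := by
  induction n with
  | zero => simp [qbin_zero q 0 hq]
  | succ n ih =>
    have key : ∀ k ∈ Finset.range (n + 1),
        qbin q (n + 1) (k + 1) * q ^ ((k + 1) * k / 2) * y ^ (k + 1)
          = qbin q n (k + 1) * q ^ ((k + 1) * k / 2) * y ^ (k + 1)
            + (y * q ^ n) * (qbin q n k * q ^ (k * (k - 1) / 2) * y ^ k) := by
      intro k hk
      have hk' : k ≤ n := Nat.lt_succ_iff.mp (Finset.mem_range.mp hk)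
      have hpow : q ^ (n - k) * q ^ ((k + 1) * k / 2) = q ^ n * q ^ (k * (k - 1) / 2) := by
        rw [← pow_add, ← pow_add]
        congr 1
        have := tri_succ k
        omega
      rw [qbin_pascal hq]
      linear_combination (qbin q n k * y ^ (k + 1)) * hpow
    rw [Finset.prod_range_succ, ih,
      Finset.sum_range_succ' (fun k => qbin q (n + 1) k * q ^ (k * (k - 1) / 2) * y ^ k) (n + 1)]
    simp only [Nat.add_sub_cancel]
    rw [Finset.sum_congr rfl key, Finset.sum_add_distrib, ← Finset.mul_sum]
    have h2 : ∑ k ∈ Finset.range (n + 1), qbin q n (k + 1) * q ^ ((k + 1) * k / 2) * y ^ (k + 1)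
        = (∑ k ∈ Finset.range (n + 1), qbin q n k * q ^ (k * (k - 1) / 2) * y ^ k) - 1 := by
      have h3 := Finset.sum_range_succ' (fun k => qbin q n k * q ^ (k * (k - 1) / 2) * y ^ k) (n + 1)
      rw [Finset.sum_range_succ] at h3
      simp only [Nat.add_sub_cancel] at h3
      rw [qbin_of_gt q (by omega), qbin_zero q n hq] at h3
      simp only [zero_mul, add_zero, pow_zero, mul_one, one_mul, Nat.zero_div,
        Nat.zero_mul] at h3
      linear_combination -h3
    rw [h2, qbin_zero _ _ hq]
    simp only [pow_zero, mul_one, one_mul, Nat.zero_div, Nat.zero_mul]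
    ring

lemma even_tri_nat (n : ℕ) : 2 * (n * (n - 1) / 2) = n * (n - 1) := by
  have := Finset.sum_range_id_mul_two n
  rw [Finset.sum_range_id] at this
  omega

lemma even_tri_int (m : ℤ) : 2 * (m * (m + 1) / 2) = m * (m + 1) := by
  rcases Int.even_mul_succ_self m with ⟨c, hc⟩
  rw [hc]
  omega

/-- The finite Jacobi triple product identity. -/
lemma finite_jtp {q u : ℂ} (hq : ‖q‖ < 1) (hq0 : q ≠ 0) (hu : u ≠ 0) (N : ℕ) :
    ∏ j ∈ Finset.range N, ((1 + u * q ^ (j + 1)) * (1 + u⁻¹ * q ^ j))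
      = ∑ k ∈ Finset.range (2 * N + 1),
          qbin q (2 * N) k * (u ^ ((k : ℤ) - N) * q ^ (((k : ℤ) - N) * ((k : ℤ) - N + 1) / 2)) := by
  rcases Nat.eq_zero_or_pos N with rfl | hN
  · simp [qbin_zero q 0 hq]
  have hN1 : 1 ≤ N := hN
  -- rewrite the second family of factors
  have step2 : ∏ j ∈ Finset.range N, (1 + u⁻¹ * q ^ j)
      = (u⁻¹) ^ N * q ^ (N * (N - 1) / 2) * ∏ j ∈ Finset.range N, (1 + u * (q ^ j)⁻¹) := by
    have e1 : (u⁻¹) ^ N = ∏ _j ∈ Finset.range N, u⁻¹ := by simp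
    have e2 : q ^ (N * (N - 1) / 2) = ∏ j ∈ Finset.range N, q ^ j := by
      rw [Finset.prod_pow_eq_pow_sum, Finset.sum_range_id]
    rw [e1, e2, ← Finset.prod_mul_distrib, ← Finset.prod_mul_distrib]
    refine Finset.prod_congr rfl fun j _ => ?_
    have hqj : (q : ℂ) ^ j ≠ 0 := pow_ne_zero _ hq0
    field_simp
    ring
  -- the big product of 2N factors
  have hy := qbin_theorem hq (u * (q ^ (N - 1))⁻¹) (2 * N)
  rw [two_mul, Finset.prod_range_add] at hy
  have hyA : ∀ j ∈ Finset.range N, 1 + u * (q ^ (N - 1))⁻¹ * q ^ j = 1 + u * (q ^ (N - 1 - j))⁻¹ := by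
    intro j hj
    have hj' : j ≤ N - 1 := by have := Finset.mem_range.mp hj; omega
    have hqe : (q : ℂ) ^ (N - 1) = q ^ (N - 1 - j) * q ^ j := by
      rw [← pow_add]; congr 1; omega
    rw [hqe, mul_inv]
    have h1 : (q : ℂ) ^ j ≠ 0 := pow_ne_zero _ hq0
    have h2 : (q : ℂ) ^ (N - 1 - j) ≠ 0 := pow_ne_zero _ hq0
    field_simp
  have hyB : ∀ j ∈ Finset.range N, 1 + u * (q ^ (N - 1))⁻¹ * q ^ (N + j) = 1 + u * q ^ (j + 1) := by
    intro j hj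
    have hqe : (q : ℂ) ^ (N + j) = q ^ (N - 1) * q ^ (j + 1) := by
      rw [← pow_add]; congr 1; omega
    rw [hqe]
    have h1 : (q : ℂ) ^ (N - 1) ≠ 0 := pow_ne_zero _ hq0
    field_simp
  rw [Finset.prod_congr rfl hyA, Finset.prod_congr rfl hyB,
    Finset.prod_range_reflect (fun j => 1 + u * (q ^ j)⁻¹) N, ← two_mul] at hy
  calc ∏ j ∈ Finset.range N, ((1 + u * q ^ (j + 1)) * (1 + u⁻¹ * q ^ j))
      = (∏ j ∈ Finset.range N, (1 + u * q ^ (j + 1)))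
          * ∏ j ∈ Finset.range N, (1 + u⁻¹ * q ^ j) := Finset.prod_mul_distrib
    _ = (u⁻¹) ^ N * q ^ (N * (N - 1) / 2)
          * ((∏ j ∈ Finset.range N, (1 + u * (q ^ j)⁻¹))
            * ∏ j ∈ Finset.range N, (1 + u * q ^ (j + 1))) := by rw [step2]; ring
    _ = (u⁻¹) ^ N * q ^ (N * (N - 1) / 2)
          * ∑ k ∈ Finset.range (2 * N + 1),
              qbin q (2 * N) k * q ^ (k * (k - 1) / 2) * (u * (q ^ (N - 1))⁻¹) ^ k := by rw [hy]
    _ = _ := by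
        rw [Finset.mul_sum]
        refine Finset.sum_congr rfl fun k hk => ?_
        have hk' : k ≤ 2 * N := by have := Finset.mem_range.mp hk; omega
        have hu' : u ^ ((k : ℤ) - N) = (u⁻¹) ^ N * u ^ k := by
          rw [zpow_sub₀ hu, zpow_natCast, zpow_natCast, inv_pow, div_eq_mul_inv, mul_comm]
        have hqpow : (u * (q ^ (N - 1))⁻¹) ^ k = u ^ k * (q ^ (k * (N - 1)))⁻¹ := by
          rw [mul_pow, inv_pow, ← pow_mul, mul_comm (N - 1) k]
        have hqz : q ^ (N * (N - 1) / 2) * q ^ (k * (k - 1) / 2) * (q ^ (k * (N - 1)))⁻¹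
            = q ^ (((k : ℤ) - N) * ((k : ℤ) - N + 1) / 2) := by
          have hA : ((N * (N - 1) / 2 : ℕ) : ℤ) * 2 = (N : ℤ) * ((N : ℤ) - 1) := by
            have h := even_tri_nat N
            have hc : ((N * (N - 1) : ℕ) : ℤ) = (N : ℤ) * ((N : ℤ) - 1) := by
              push_cast [Nat.cast_sub hN1]; ring
            omega
          have hB : ((k * (k - 1) / 2 : ℕ) : ℤ) * 2 = (k : ℤ) * ((k : ℤ) - 1) := by
            have h := even_tri_nat k
            have hc : ((k * (k - 1) : ℕ) : ℤ) = (k : ℤ) * ((k : ℤ) - 1) := by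
              rcases Nat.eq_zero_or_pos k with rfl | hk1
              · simp
              · push_cast [Nat.cast_sub hk1]; ring
            omega
          have hT : (((k : ℤ) - N) * ((k : ℤ) - N + 1) / 2) * 2
              = ((k : ℤ) - N) * ((k : ℤ) - N + 1) := by
            have := even_tri_int ((k : ℤ) - N)
            omega
          have hC : ((k * (N - 1) : ℕ) : ℤ) = (k : ℤ) * ((N : ℤ) - 1) := by
            push_cast [Nat.cast_sub hN1]; ring
          have hexp : ((N * (N - 1) / 2 : ℕ) : ℤ) + ((k * (k - 1) / 2 : ℕ) : ℤ)
              - ((k * (N - 1) : ℕ) : ℤ) = ((k : ℤ) - N) * ((k : ℤ) - N + 1) / 2 := by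
            have key : (((N * (N - 1) / 2 : ℕ) : ℤ) + ((k * (k - 1) / 2 : ℕ) : ℤ)
                - ((k * (N - 1) : ℕ) : ℤ)) * 2
                = (((k : ℤ) - N) * ((k : ℤ) - N + 1) / 2) * 2 := by
              rw [hT, hC]
              nlinarith [hA, hB]
            linarith [key]
          rw [← zpow_natCast q (N * (N - 1) / 2), ← zpow_natCast q (k * (k - 1) / 2),
            ← zpow_natCast q (k * (N - 1)), ← zpow_neg, ← zpow_add₀ hq0, ← zpow_add₀ hq0,
            ← hexp]
          ring_nf
        rw [hu', hqpow, ← hqz]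
        ring

open Filter Topology

/-- Summability of logs of `1 + aₙ` for absolutely summable `aₙ`. -/
lemma summable_clog {a : ℕ → ℂ} (h : Summable fun n => ‖a n‖) :
    Summable fun n => Complex.log (1 + a n) := by
  have h0 : Tendsto (fun n => ‖a n‖) atTop (𝓝 0) := h.tendsto_atTop_zero
  refine Summable.of_norm_bounded_eventually_nat (g := fun n => (3 / 2) * ‖a n‖)
    (h.mul_left _) ?_
  filter_upwards [h0.eventually_le_const (by norm_num : (0 : ℝ) < 1 / 2)] with n hn
  exact Complex.norm_log_one_add_half_le_self (by simpa using hn)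

lemma multipliable_one_add {a : ℕ → ℂ} (h : Summable fun n => ‖a n‖)
    (h1 : ∀ n, 1 + a n ≠ 0) : Multipliable fun n => 1 + a n :=
  Complex.multipliable_of_summable_log (summable_clog h)

lemma tprod_one_add_ne_zero {a : ℕ → ℂ} (h : Summable fun n => ‖a n‖)
    (h1 : ∀ n, 1 + a n ≠ 0) : (∏' n, (1 + a n)) ≠ 0 := by
  have := Complex.cexp_tsum_eq_tprod (fun n => h1 n) (summable_clog h)
  rw [← this]
  exact Complex.exp_ne_zero _

lemma abs_log_one_sub_le {x : ℝ} (h0 : 0 ≤ x) (h2 : x ≤ 1 / 2) :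
    |Real.log (1 - x)| ≤ 2 * x := by
  have hx1 : (0 : ℝ) < 1 - x := by linarith
  have hle : Real.log (1 - x) ≤ 0 := Real.log_nonpos (by linarith) (by linarith)
  have hexp : Real.exp (-(2 * x)) ≤ 1 - x := by
    have h1 : 2 * x + 1 ≤ Real.exp (2 * x) := Real.add_one_le_exp (2 * x)
    have h3 : (1 + 2 * x)⁻¹ ≤ 1 - x := by
      rw [inv_le_iff_one_le_mul₀ (by linarith)]
      nlinarith
    calc Real.exp (-(2 * x)) = (Real.exp (2 * x))⁻¹ := by rw [Real.exp_neg]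
      _ ≤ (1 + 2 * x)⁻¹ := by
          apply inv_anti₀ (by linarith) (by linarith)
      _ ≤ 1 - x := h3
  have hge : -(2 * x) ≤ Real.log (1 - x) := by
    rw [← Real.log_exp (-(2 * x))]
    exact Real.log_le_log (Real.exp_pos _) hexp
  rw [abs_le]
  constructor <;> linarith

section Qfixed

variable {q : ℂ} (hq : ‖q‖ < 1)
include hq

lemma summable_qgeom : Summable fun j : ℕ => ‖q‖ ^ (j + 1) := by
  have := (summable_geometric_of_lt_one (norm_nonneg q) hq).mul_right ‖q‖
  refine this.congr fun j => ?_
  rw [← pow_succ]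

omit hq in
/-- The real infinite product `∏ (1 - ‖q‖^(j+1))`. -/
noncomputable def cq (q : ℂ) : ℝ := ∏' j : ℕ, (1 - ‖q‖ ^ (j + 1))

lemma qpow_lt_one (j : ℕ) : ‖q‖ ^ (j + 1) < 1 :=
  pow_lt_one₀ (norm_nonneg q) hq (Nat.succ_ne_zero j)

lemma cq_factor_pos (j : ℕ) : (0 : ℝ) < 1 - ‖q‖ ^ (j + 1) := by
  have := qpow_lt_one hq j; linarith

lemma summable_rlog : Summable fun j : ℕ => Real.log (1 - ‖q‖ ^ (j + 1)) := by
  have h0 : Tendsto (fun j : ℕ => ‖q‖ ^ (j + 1)) atTop (𝓝 0) := (summable_qgeom hq).tendsto_atTop_zero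
  refine Summable.of_norm_bounded_eventually_nat (g := fun j => 2 * ‖q‖ ^ (j + 1))
    ((summable_qgeom hq).mul_left _) ?_
  filter_upwards [h0.eventually_le_const (by norm_num : (0 : ℝ) < 1 / 2)] with j hj
  exact abs_log_one_sub_le (pow_nonneg (norm_nonneg q) _) hj

lemma multipliable_cq : Multipliable fun j : ℕ => 1 - ‖q‖ ^ (j + 1) :=
  Real.multipliable_of_summable_log (fun j => cq_factor_pos hq j) (summable_rlog hq)

lemma cq_pos : 0 < cq q := by
  have := Real.rexp_tsum_eq_tprod (fun j => cq_factor_pos hq j) (summable_rlog hq)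
  rw [cq, ← this]
  exact Real.exp_pos _

lemma cq_le_prod (n : ℕ) : cq q ≤ ∏ j ∈ Finset.range n, (1 - ‖q‖ ^ (j + 1)) := by
  have hDt := (multipliable_cq hq).hasProd.tendsto_prod_nat
  have key : ∀ᶠ m in atTop,
      (∏ j ∈ Finset.range m, (1 - ‖q‖ ^ (j + 1))) ≤ ∏ j ∈ Finset.range n, (1 - ‖q‖ ^ (j + 1)) := by
    filter_upwards [eventually_ge_atTop n] with m hm
    have hmn : m = n + (m - n) := by omega
    rw [hmn, Finset.prod_range_add]
    have h1 : ∏ j ∈ Finset.range (m - n), (1 - ‖q‖ ^ (n + j + 1)) ≤ 1 :=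
      Finset.prod_le_one (fun j _ => (cq_factor_pos hq (n + j)).le)
        (fun j _ => by
          have := pow_nonneg (norm_nonneg q) (n + j + 1); linarith)
    have h2 : (0 : ℝ) ≤ ∏ j ∈ Finset.range n, (1 - ‖q‖ ^ (j + 1)) :=
      Finset.prod_nonneg fun j _ => (cq_factor_pos hq j).le
    exact mul_le_of_le_one_right h2 h1
  exact le_of_tendsto hDt key

omit hq in
/-- Upper bound constant for `‖E q n‖`. -/
noncomputable def Cq (q : ℂ) : ℝ := Real.exp (∑' j : ℕ, ‖q‖ ^ (j + 1))

lemma norm_E_le (n : ℕ) : ‖E q n‖ ≤ Cq q := by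
  rw [E, norm_prod]
  calc ∏ j ∈ Finset.range n, ‖1 - q ^ (j + 1)‖
      ≤ ∏ j ∈ Finset.range n, Real.exp (‖q‖ ^ (j + 1)) := by
        refine Finset.prod_le_prod (fun j _ => norm_nonneg _) fun j _ => ?_
        calc ‖1 - q ^ (j + 1)‖ ≤ ‖(1 : ℂ)‖ + ‖q ^ (j + 1)‖ := norm_sub_le _ _
          _ = 1 + ‖q‖ ^ (j + 1) := by rw [norm_one, norm_pow]
          _ ≤ Real.exp (‖q‖ ^ (j + 1)) := by
              have := Real.add_one_le_exp (‖q‖ ^ (j + 1)); linarith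
    _ = Real.exp (∑ j ∈ Finset.range n, ‖q‖ ^ (j + 1)) := (Real.exp_sum _ _).symm
    _ ≤ Cq q := by
        apply Real.exp_le_exp.mpr
        exact Summable.sum_le_tsum _ (fun j _ => pow_nonneg (norm_nonneg q) _) (summable_qgeom hq)

lemma cq_le_norm_E (n : ℕ) : cq q ≤ ‖E q n‖ := by
  refine (cq_le_prod hq n).trans ?_
  rw [E, norm_prod]
  refine Finset.prod_le_prod (fun j _ => (cq_factor_pos hq j).le) fun j _ => ?_
  calc 1 - ‖q‖ ^ (j + 1) = ‖(1 : ℂ)‖ - ‖q ^ (j + 1)‖ := by rw [norm_one, norm_pow]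
    _ ≤ ‖1 - q ^ (j + 1)‖ := norm_sub_norm_le _ _

lemma norm_qbin_le (n k : ℕ) : ‖qbin q n k‖ ≤ Cq q / (cq q * cq q) := by
  have hc := cq_pos hq
  have hC : 0 < Cq q := Real.exp_pos _
  rw [qbin]
  split_ifs with h
  · rw [norm_div, norm_mul]
    apply div_le_div₀ (le_of_lt (by positivity)) (norm_E_le hq n) (by positivity)
    exact mul_le_mul (cq_le_norm_E hq k) (cq_le_norm_E hq (n - k)) hc.le (norm_nonneg _)
  · rw [norm_zero]; positivity
end Qfixed

/-- The infinite product `∏ (1 - q^(j+1))`. -/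
noncomputable def EI (q : ℂ) : ℂ := ∏' j : ℕ, (1 - q ^ (j + 1))

section Main

variable {q u : ℂ} (hq : ‖q‖ < 1)
include hq

lemma multipliable_E : Multipliable fun j : ℕ => 1 - q ^ (j + 1) := by
  have h := multipliable_one_add (a := fun j => -(q ^ (j + 1)))
    (by simpa using summable_qgeom hq)
    (fun n => by rw [← sub_eq_add_neg]; exact one_sub_pow_ne_zero hq n)
  have he : (fun j : ℕ => 1 + -(q ^ (j + 1))) = fun j => 1 - q ^ (j + 1) := by
    funext j; ring
  rwa [he] at h

lemma tendsto_E : Tendsto (E q) atTop (𝓝 (EI q)) :=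
  (multipliable_E hq).hasProd.tendsto_prod_nat

lemma EI_ne_zero : EI q ≠ 0 := by
  have h := tprod_one_add_ne_zero (a := fun j => -(q ^ (j + 1)))
    (by simpa using summable_qgeom hq)
    (fun n => by rw [← sub_eq_add_neg]; exact one_sub_pow_ne_zero hq n)
  have he : (fun j : ℕ => 1 + -(q ^ (j + 1))) = fun j => 1 - q ^ (j + 1) := by
    funext j; ring
  rwa [he] at h

lemma tendsto_qbin (m : ℤ) :
    Tendsto (fun N : ℕ => qbin q (2 * N) ((m + N).toNat)) atTop (𝓝 (EI q)⁻¹) := by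
  have h2N : Tendsto (fun N : ℕ => E q (2 * N)) atTop (𝓝 (EI q)) := by
    refine (tendsto_E hq).comp (tendsto_atTop.mpr fun b => ?_)
    filter_upwards [eventually_ge_atTop b] with N hN
    omega
  have ha : Tendsto (fun N : ℕ => E q ((m + N).toNat)) atTop (𝓝 (EI q)) := by
    refine (tendsto_E hq).comp (tendsto_atTop.mpr fun b => ?_)
    filter_upwards [eventually_ge_atTop (b + m.natAbs)] with N hN
    omega
  have hb : Tendsto (fun N : ℕ => E q (((N : ℤ) - m).toNat)) atTop (𝓝 (EI q)) := by
    refine (tendsto_E hq).comp (tendsto_atTop.mpr fun b => ?_)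
    filter_upwards [eventually_ge_atTop (b + m.natAbs)] with N hN
    omega
  have hne : EI q * EI q ≠ 0 := mul_ne_zero (EI_ne_zero hq) (EI_ne_zero hq)
  have hG : Tendsto (fun N : ℕ =>
      E q (2 * N) / (E q ((m + N).toNat) * E q (((N : ℤ) - m).toNat))) atTop
      (𝓝 (EI q / (EI q * EI q))) := h2N.div (ha.mul hb) hne
  have heq : EI q / (EI q * EI q) = (EI q)⁻¹ := by
    field_simp
  rw [heq] at hG
  refine hG.congr' ?_
  filter_upwards [eventually_ge_atTop m.natAbs] with N hN
  have hk : (m + (N : ℤ)).toNat ≤ 2 * N := by omega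
  have h2 : 2 * N - (m + (N : ℤ)).toNat = ((N : ℤ) - m).toNat := by omega
  rw [qbin, if_pos hk, h2]

omit hq in
lemma zT_succ (m : ℤ) : (m + 1) * (m + 1 + 1) / 2 = m * (m + 1) / 2 + (m + 1) := by
  have h1 := even_tri_int (m + 1)
  have h2 := even_tri_int m
  have h3 : (m + 1) * (m + 1 + 1) = m * (m + 1) + 2 * (m + 1) := by ring
  linarith

variable (hq0 : q ≠ 0) (hu : u ≠ 0)
include hq0 hu

lemma summable_theta_norm : Summable fun m : ℤ => ‖u ^ m * q ^ (m * (m + 1) / 2)‖ := by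
  have hq1 : ‖q‖ < 1 := hq
  have hpow0 : Tendsto (fun n : ℕ => ‖q‖ ^ n) atTop (𝓝 0) :=
    tendsto_pow_atTop_nhds_zero_of_lt_one (norm_nonneg q) hq1
  apply Summable.of_nat_of_neg
  · -- positive part, ratio test
    apply summable_of_ratio_norm_eventually_le (r := 1 / 2) (by norm_num)
    have h0 : Tendsto (fun n : ℕ => ‖u‖ * ‖q‖ ^ (n + 1)) atTop (𝓝 0) := by
      simpa using (hpow0.comp (tendsto_add_atTop_nat 1)).const_mul ‖u‖
    filter_upwards [h0.eventually_le_const (by norm_num : (0 : ℝ) < 1 / 2)] with n hn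
    have hrec : u ^ (((n + 1 : ℕ) : ℤ)) * q ^ ((((n + 1 : ℕ) : ℤ)) * (((n + 1 : ℕ) : ℤ) + 1) / 2)
        = (u ^ ((n : ℕ) : ℤ) * q ^ (((n : ℕ) : ℤ) * (((n : ℕ) : ℤ) + 1) / 2)) * (u * q ^ (n + 1)) := by
      have hc : ((n + 1 : ℕ) : ℤ) = ((n : ℕ) : ℤ) + 1 := by push_cast; ring
      rw [hc, zpow_add_one₀ hu, zT_succ, zpow_add₀ hq0]
      have : (q : ℂ) ^ (((n : ℤ)) + 1) = q ^ (n + 1 : ℕ) := by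
        rw [← zpow_natCast]; norm_num
      rw [this]; ring
    rw [norm_norm, norm_norm, hrec, norm_mul]
    have hb : ‖u * q ^ (n + 1)‖ ≤ 1 / 2 := by
      rw [norm_mul, norm_pow]; exact hn
    calc ‖u ^ ((n : ℕ) : ℤ) * q ^ (((n : ℕ) : ℤ) * (((n : ℕ) : ℤ) + 1) / 2)‖ * ‖u * q ^ (n + 1)‖
        ≤ ‖u ^ ((n : ℕ) : ℤ) * q ^ (((n : ℕ) : ℤ) * (((n : ℕ) : ℤ) + 1) / 2)‖ * (1 / 2) :=
          mul_le_mul_of_nonneg_left hb (norm_nonneg _)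
      _ = 1 / 2 * ‖u ^ ((n : ℕ) : ℤ) * q ^ (((n : ℕ) : ℤ) * (((n : ℕ) : ℤ) + 1) / 2)‖ := by ring
  · -- negative part, ratio test
    apply summable_of_ratio_norm_eventually_le (r := 1 / 2) (by norm_num)
    have h0 : Tendsto (fun n : ℕ => ‖u⁻¹‖ * ‖q‖ ^ n) atTop (𝓝 0) := by
      simpa using hpow0.const_mul ‖u⁻¹‖
    filter_upwards [h0.eventually_le_const (by norm_num : (0 : ℝ) < 1 / 2)] with n hn
    have hrec : u ^ (-((n + 1 : ℕ) : ℤ)) * q ^ ((-((n + 1 : ℕ) : ℤ)) * (-((n + 1 : ℕ) : ℤ) + 1) / 2)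
        = (u ^ (-((n : ℕ) : ℤ)) * q ^ ((-((n : ℕ) : ℤ)) * (-((n : ℕ) : ℤ) + 1) / 2))
            * (u⁻¹ * q ^ (n : ℕ)) := by
      have hc : -((n + 1 : ℕ) : ℤ) = -((n : ℕ) : ℤ) - 1 := by push_cast; ring
      have hT : (-((n : ℕ) : ℤ) - 1) * ((-((n : ℕ) : ℤ) - 1) + 1) / 2
          = (-((n : ℕ) : ℤ)) * (-((n : ℕ) : ℤ) + 1) / 2 + (n : ℤ) := by
        have h1 := even_tri_int (-((n : ℕ) : ℤ) - 1)
        have h2 := even_tri_int (-((n : ℕ) : ℤ))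
        linarith
      rw [hc, sub_eq_add_neg, zpow_add₀ hu]
      rw [show (-((n : ℕ) : ℤ) + -1) * (-((n : ℕ) : ℤ) + -1 + 1) / 2
            = (-((n : ℕ) : ℤ) - 1) * ((-((n : ℕ) : ℤ) - 1) + 1) / 2 by ring_nf]
      rw [hT, zpow_add₀ hq0]
      have : (q : ℂ) ^ ((n : ℤ)) = q ^ (n : ℕ) := by rw [← zpow_natCast]
      rw [this, zpow_neg_one]; ring
    rw [norm_norm, norm_norm, hrec, norm_mul]
    have hb : ‖u⁻¹ * q ^ (n : ℕ)‖ ≤ 1 / 2 := by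
      rw [norm_mul, norm_pow]; exact hn
    calc ‖u ^ (-((n : ℕ) : ℤ)) * q ^ ((-((n : ℕ) : ℤ)) * (-((n : ℕ) : ℤ) + 1) / 2)‖ * ‖u⁻¹ * q ^ (n : ℕ)‖
        ≤ ‖u ^ (-((n : ℕ) : ℤ)) * q ^ ((-((n : ℕ) : ℤ)) * (-((n : ℕ) : ℤ) + 1) / 2)‖ * (1 / 2) :=
          mul_le_mul_of_nonneg_left hb (norm_nonneg _)
      _ = 1 / 2 * ‖u ^ (-((n : ℕ) : ℤ)) * q ^ ((-((n : ℕ) : ℤ)) * (-((n : ℕ) : ℤ) + 1) / 2)‖ := by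
          ring

end Main

section Tannery

variable {q u : ℂ} (hq : ‖q‖ < 1) (hq0 : q ≠ 0) (hu : u ≠ 0)
include hq hq0 hu

lemma tendsto_main :
    Tendsto (fun N : ℕ => ∏ j ∈ Finset.range N,
        ((1 - q ^ (j + 1)) * (1 + u * q ^ (j + 1)) * (1 + u⁻¹ * q ^ j))) atTop
      (𝓝 (∑' m : ℤ, u ^ m * q ^ (m * (m + 1) / 2))) := by
  classical
  set f : ℕ → ℤ → ℂ := fun N m =>
    if m ∈ Finset.Icc (-(N : ℤ)) (N : ℤ) then
      qbin q (2 * N) ((m + N).toNat) * (u ^ m * q ^ (m * (m + 1) / 2)) else 0 with hf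
  -- the tsum of `f N` equals the finite Jacobi sum
  have hfs : ∀ N : ℕ, (∑' m : ℤ, f N m) = ∑ k ∈ Finset.range (2 * N + 1),
      qbin q (2 * N) k * (u ^ ((k : ℤ) - N) * q ^ (((k : ℤ) - N) * ((k : ℤ) - N + 1) / 2)) := by
    intro N
    rw [tsum_eq_sum (s := Finset.Icc (-(N : ℤ)) (N : ℤ)) (fun m hm => if_neg hm)]
    refine Finset.sum_nbij' (fun m => (m + N).toNat) (fun k => (k : ℤ) - N) ?_ ?_ ?_ ?_ ?_
    · intro m hm
      simp only [Finset.mem_Icc] at hm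
      simp only [Finset.mem_range]
      omega
    · intro k hk
      simp only [Finset.mem_range] at hk
      simp only [Finset.mem_Icc]
      omega
    · intro m hm
      simp only [Finset.mem_Icc] at hm
      show ((((m + (N : ℤ)).toNat : ℕ) : ℤ)) - (N : ℤ) = m
      omega
    · intro k hk
      simp only [Finset.mem_range] at hk
      show (((k : ℤ) - (N : ℤ) + (N : ℤ)).toNat) = k
      omega
    · intro m hm
      simp only [Finset.mem_Icc] at hm
      have h1 : (((m + (N : ℤ)).toNat : ℤ)) - (N : ℤ) = m := by omega
      show f N m = qbin q (2 * N) ((m + N).toNat)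
        * (u ^ ((((m + N).toNat : ℤ)) - N)
          * q ^ (((((m + N).toNat : ℤ)) - N) * ((((m + N).toNat : ℤ)) - N + 1) / 2))
      rw [h1]
      exact if_pos (Finset.mem_Icc.mpr ⟨hm.1, hm.2⟩)
  -- Tannery's theorem
  have hTan : Tendsto (fun N : ℕ => ∑' m : ℤ, f N m) atTop
      (𝓝 (∑' m : ℤ, (EI q)⁻¹ * (u ^ m * q ^ (m * (m + 1) / 2)))) := by
    refine tendsto_tsum_of_dominated_convergence
      (bound := fun m : ℤ => (Cq q / (cq q * cq q)) * ‖u ^ m * q ^ (m * (m + 1) / 2)‖)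
      ((summable_theta_norm hq hq0 hu).mul_left _) (fun m => ?_) ?_
    · refine Tendsto.congr' ?_ ((tendsto_qbin hq m).mul_const (u ^ m * q ^ (m * (m + 1) / 2)))
      filter_upwards [eventually_ge_atTop m.natAbs] with N hN
      exact (if_pos (by simp only [Finset.mem_Icc]; omega)).symm
    · refine Eventually.of_forall fun N => fun m => ?_
      simp only [hf]
      split_ifs with hm
      · rw [norm_mul]
        exact mul_le_mul_of_nonneg_right (norm_qbin_le hq _ _) (norm_nonneg _)
      · rw [norm_zero]
        have h1 : 0 < Cq q / (cq q * cq q) := by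
          have := cq_pos (q := q) hq
          have := Real.exp_pos (∑' j : ℕ, ‖q‖ ^ (j + 1))
          apply div_pos
          · exact this
          · positivity
        positivity
  rw [tsum_mul_left] at hTan
  -- combine with the convergence of `E q N`
  have hcomb := (tendsto_E hq).mul hTan
  have hval : EI q * ((EI q)⁻¹ * ∑' m : ℤ, u ^ m * q ^ (m * (m + 1) / 2))
      = ∑' m : ℤ, u ^ m * q ^ (m * (m + 1) / 2) := by
    rw [← mul_assoc, mul_inv_cancel₀ (EI_ne_zero hq), one_mul]
  rw [hval] at hcomb
  refine hcomb.congr fun N => ?_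
  rw [hfs N, ← finite_jtp hq hq0 hu N, E, ← Finset.prod_mul_distrib]
  exact Finset.prod_congr rfl fun j _ => by ring

end Tannery

end JTP

open JTP Filter Topology

/-- **Jacobi triple product identity.** For `‖q‖ < 1` and `u ≠ 0`,
`∏_{j=1}^∞ (1 - q^j)(1 + u q^j)(1 + u⁻¹ q^{j-1}) = ∑_{m ∈ ℤ} u^m q^{m(m+1)/2}`. -/
theorem jacobi_triple_product (q u : ℂ) (hq : ‖q‖ < 1) (hu : u ≠ 0) :
    ∏' j : ℕ, ((1 - q ^ (j + 1)) * (1 + u * q ^ (j + 1)) * (1 + u⁻¹ * q ^ j))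
      = ∑' m : ℤ, u ^ m * q ^ (m * (m + 1) / 2) := by
  by_cases hq0 : q = 0
  · subst hq0
    rw [tsum_eq_sum (s := ({0, -1} : Finset ℤ)) ?hzero]
    case hzero =>
      intro m hm
      simp only [Finset.mem_insert, Finset.mem_singleton] at hm
      push_neg at hm
      have hT := even_tri_int m
      have hTne : m * (m + 1) / 2 ≠ 0 := by
        intro h
        rw [h] at hT
        simp only [mul_zero] at hT
        rcases mul_eq_zero.mp hT.symm with h1 | h1 <;> omega
      rw [zero_zpow _ hTne, mul_zero]
    rw [tprod_eq_prod (s := ({0} : Finset ℕ)) ?hone]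
    case hone =>
      intro j hj
      rw [Finset.mem_singleton] at hj
      rw [zero_pow (Nat.succ_ne_zero j), zero_pow hj]
      ring
    norm_num
  · have hA := tendsto_main hq hq0 hu
    by_cases hz : ∃ j : ℕ, (1 - q ^ (j + 1)) * (1 + u * q ^ (j + 1)) * (1 + u⁻¹ * q ^ j) = 0
    · obtain ⟨j0, hj0⟩ := hz
      have hR : (∑' m : ℤ, u ^ m * q ^ (m * (m + 1) / 2)) = 0 := by
        refine tendsto_nhds_unique hA ?_
        refine Tendsto.congr' ?_ (tendsto_const_nhds (x := (0 : ℂ)))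
        filter_upwards [eventually_ge_atTop (j0 + 1)] with N hN
        exact (Finset.prod_eq_zero (Finset.mem_range.mpr (by omega)) hj0).symm
      have hP : HasProd (fun j : ℕ =>
          (1 - q ^ (j + 1)) * (1 + u * q ^ (j + 1)) * (1 + u⁻¹ * q ^ j)) 0 := by
        unfold HasProd
        refine Tendsto.congr' ?_ (tendsto_const_nhds (x := (0 : ℂ)))
        filter_upwards [eventually_ge_atTop ({j0} : Finset ℕ)] with s hs
        exact (Finset.prod_eq_zero (hs (Finset.mem_singleton_self j0)) hj0).symm
      rw [hP.tprod_eq, hR]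
    · push_neg at hz
      have M1 := multipliable_E hq
      have M2 : Multipliable fun j : ℕ => 1 + u * q ^ (j + 1) := by
        refine multipliable_one_add ?_ ?_
        · refine (((summable_qgeom hq).mul_left ‖u‖)).congr fun j => ?_
          rw [norm_mul, norm_pow]
        · intro j h
          exact hz j (by rw [h, mul_zero, zero_mul])
      have M3 : Multipliable fun j : ℕ => 1 + u⁻¹ * q ^ j := by
        refine multipliable_one_add ?_ ?_
        · refine ((summable_geometric_of_lt_one (norm_nonneg q) hq).mul_left ‖u⁻¹‖).congr fun j => ?_
          rw [norm_mul, norm_pow]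
        · intro j h
          exact hz j (by rw [h, mul_zero])
      have M : Multipliable fun j : ℕ =>
          (1 - q ^ (j + 1)) * (1 + u * q ^ (j + 1)) * (1 + u⁻¹ * q ^ j) :=
        (M1.mul M2).mul M3
      exact tendsto_nhds_unique M.hasProd.tendsto_prod_nat hA
end

section
/- Let k ∉ ℚ, h^∨_osp = n + 1/2, h^∨_sp = n + 1, and ℓ defined by 1/(k + h^∨_sp) + 1/(ℓ + h^∨_sp) = 2. For weights λ, μ and a Weyl group element w with dot action w ∘ λ = w(λ + ρ_sp) - ρ_sp, define Δ_{w∘λ, μ} = m_k^osp(μ) - m_k^sp(λ) + (w∘λ - μ | w∘λ - μ + 2ρ̄₁), where m_k^osp(μ) = (μ | μ + 2ρ_osp)/(2(k + h^∨_osp)) and m_k^sp(λ) = (λ | λ + 2ρ_sp)/(2(k + h^∨_sp)). Then Δ_{w∘λ, μ} = m_ℓ^sp(w∘λ - 2(ℓ + h^∨_sp)μ) - (w∘λ - 2(ℓ + h^∨_sp)μ | ρ^∨_sp), where m_ℓ^sp(ν) = (ν | ν + 2ρ_sp)/(2(ℓ + h^∨_sp)). -/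
open scoped RealInnerProductSpace

set_option maxHeartbeats 4000000 in
/-- Lemma on the conformal weight shift: with `k ∉ ℚ`, `h^∨_osp = n + 1/2`,
`h^∨_sp = n + 1`, `ℓ` defined by `1/(k + h^∨_sp) + 1/(ℓ + h^∨_sp) = 2`,
`ρ_osp = ρ_sp - ρ̄₁ = (1/2)ρ^∨_sp`, `|ρ̄₁|² = n/8`, and dot action
`w ∘ λ = w(λ + ρ_sp) - ρ_sp` for an isometry `w`:
`Δ_{w∘λ,μ} := m_k^osp(μ) - m_k^sp(λ) + (w∘λ - μ | w∘λ - μ + 2ρ̄₁)`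
equals `m_ℓ^sp(w∘λ - 2(ℓ+h^∨_sp)μ) - (w∘λ - 2(ℓ+h^∨_sp)μ | ρ^∨_sp)`,
where `m_k^g(ν) = (ν | ν + 2ρ_g)/(2(k + h^∨_g))`. -/
theorem delta_lambda_mu {V : Type*} [NormedAddCommGroup V] [InnerProductSpace ℝ V]
    (n : ℕ) (k l hsp hosp : ℝ) (hk : Irrational k)
    (hhsp : hsp = (n : ℝ) + 1) (hhosp : hosp = (n : ℝ) + 1 / 2)
    (hl : 1 / (k + hsp) + 1 / (l + hsp) = 2)
    (ρsp ρ1 ρosp ρv lam mu : V) (w : V ≃ₗᵢ[ℝ] V)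
    (hρosp : ρosp = ρsp - ρ1) (hρv : ρosp = (1 / 2 : ℝ) • ρv)
    (hρ1 : ⟪ρ1, ρ1⟫ = (n : ℝ) / 8) :
    ⟪mu, mu + (2 : ℝ) • ρosp⟫ / (2 * (k + hosp))
        - ⟪lam, lam + (2 : ℝ) • ρsp⟫ / (2 * (k + hsp))
        + ⟪(w (lam + ρsp) - ρsp) - mu,
            ((w (lam + ρsp) - ρsp) - mu) + (2 : ℝ) • ρ1⟫
      = ⟪(w (lam + ρsp) - ρsp) - (2 * (l + hsp)) • mu,
            ((w (lam + ρsp) - ρsp) - (2 * (l + hsp)) • mu) + (2 : ℝ) • ρsp⟫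
          / (2 * (l + hsp))
        - ⟪(w (lam + ρsp) - ρsp) - (2 * (l + hsp)) • mu, ρv⟫ := by
  have hAirr : Irrational (k + hsp) := by
    rw [hhsp]
    have := hk.add_natCast (n + 1)
    push_cast at this
    convert this using 2 <;> push_cast <;> ring
  have hA : k + hsp ≠ 0 := fun h => hAirr ⟨0, by rw [h]; norm_num⟩
  have hCirr : Irrational (2 * (k + hsp) - 1) := by
    have := (hAirr.ratCast_mul (q := 2) (by norm_num)).sub_ratCast 1
    convert this using 2 <;> push_cast <;> ring
  have hC : 2 * (k + hsp) - 1 ≠ 0 := fun h => hCirr ⟨0, by rw [h]; norm_num⟩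
  have h12 : k + hsp - 1 / 2 ≠ 0 := fun h => hC (by linarith)
  have hB : l + hsp ≠ 0 := by
    intro h0
    rw [h0, div_zero, add_zero] at hl
    have hval : k + hsp = 1 / 2 := by field_simp at hl; linarith
    exact hAirr ⟨1/2, by rw [hval]; norm_num⟩
  have hBval : l + hsp = (k + hsp) / (2 * (k + hsp) - 1) := by
    rw [eq_div_iff hC]
    field_simp at hl
    linarith
  have hhosp' : k + hosp = k + hsp - 1 / 2 := by rw [hhosp, hhsp]; ring
  have hρvval : ρv = (2 : ℝ) • ρsp - (2 : ℝ) • ρ1 := by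
    have h2 : ρsp - ρ1 = (1 / 2 : ℝ) • ρv := hρosp ▸ hρv
    rw [show ρv = (2:ℝ) • ((1/2:ℝ) • ρv) by rw [smul_smul]; norm_num, ← h2, smul_sub]
  subst hρosp
  rw [hρvval]
  set X := w (lam + ρsp) with hXdef
  set s := 2 * (l + hsp) with hsdef
  have E : ⟪X, X⟫ = ⟪lam, lam⟫ + 2 * ⟪lam, ρsp⟫ + ⟪ρsp, ρsp⟫ := by
    have h := w.inner_map_map (lam + ρsp) (lam + ρsp)
    simp only [inner_add_left, inner_add_right, real_inner_comm lam ρsp] at h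
    rw [← hXdef] at h
    linarith
  have g1 : ⟪mu, mu + (2 : ℝ) • (ρsp - ρ1)⟫ = ⟪mu, mu⟫ + 2 * ⟪mu, ρsp⟫ - 2 * ⟪mu, ρ1⟫ := by
    simp only [inner_add_right, inner_sub_right, real_inner_smul_right]
    ring
  have g2 : ⟪lam, lam + (2 : ℝ) • ρsp⟫ = ⟪lam, lam⟫ + 2 * ⟪lam, ρsp⟫ := by
    simp only [inner_add_right, real_inner_smul_right]
  have g3 : ⟪X - ρsp - mu, X - ρsp - mu + (2 : ℝ) • ρ1⟫
      = ⟪X, X⟫ + ⟪ρsp, ρsp⟫ + ⟪mu, mu⟫ - 2 * ⟪X, ρsp⟫ - 2 * ⟪X, mu⟫ + 2 * ⟪mu, ρsp⟫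
        + 2 * ⟪X, ρ1⟫ - 2 * ⟪ρsp, ρ1⟫ - 2 * ⟪mu, ρ1⟫ := by
    simp only [inner_add_right, inner_sub_left, inner_sub_right, real_inner_smul_right,
      real_inner_comm X ρsp, real_inner_comm X ρ1, real_inner_comm X mu,
      real_inner_comm mu ρsp, real_inner_comm mu ρ1, real_inner_comm ρsp ρ1]
    ring
  have g4 : ⟪X - ρsp - s • mu, X - ρsp - s • mu + (2 : ℝ) • ρsp⟫
      = ⟪X, X⟫ + ⟪ρsp, ρsp⟫ + s^2 * ⟪mu, mu⟫ - 2 * ⟪X, ρsp⟫ - 2 * s * ⟪X, mu⟫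
        + 2 * s * ⟪mu, ρsp⟫ + 2 * ⟪X, ρsp⟫ - 2 * ⟪ρsp, ρsp⟫ - 2 * s * ⟪mu, ρsp⟫ := by
    simp only [inner_add_right, inner_sub_left, inner_sub_right, real_inner_smul_right,
      real_inner_smul_left,
      real_inner_comm X ρsp, real_inner_comm X ρ1, real_inner_comm X mu,
      real_inner_comm mu ρsp, real_inner_comm mu ρ1, real_inner_comm ρsp ρ1]
    ring
  have g5 : ⟪X - ρsp - s • mu, (2 : ℝ) • ρsp - (2 : ℝ) • ρ1⟫
      = 2 * ⟪X, ρsp⟫ - 2 * ⟪ρsp, ρsp⟫ - 2 * s * ⟪mu, ρsp⟫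
        - 2 * ⟪X, ρ1⟫ + 2 * ⟪ρsp, ρ1⟫ + 2 * s * ⟪mu, ρ1⟫ := by
    simp only [inner_sub_left, inner_sub_right, real_inner_smul_right, real_inner_smul_left,
      real_inner_comm X ρsp, real_inner_comm X ρ1, real_inner_comm X mu,
      real_inner_comm mu ρsp, real_inner_comm mu ρ1, real_inner_comm ρsp ρ1]
    ring
  rw [g1, g2, g3, g4, g5, E, hsdef, hBval,
    show 2 * (k + hosp) = 2 * (k + hsp) - 1 by rw [hhosp, hhsp]; ring]
  generalize hA' : k + hsp = A at hA hC ⊢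
  rw [show (2 : ℝ) * (A / (2 * A - 1)) = 2 * A / (2 * A - 1) by ring,
    div_div_eq_mul_div]
  generalize ⟪lam, lam⟫ = all
  generalize ⟪lam, ρsp⟫ = als
  generalize ⟪X, ρsp⟫ = axs
  generalize ⟪X, ρ1⟫ = ax1
  generalize ⟪X, mu⟫ = axm
  generalize ⟪mu, mu⟫ = amm
  generalize ⟪mu, ρsp⟫ = ams
  generalize ⟪mu, ρ1⟫ = am1
  generalize ⟪ρsp, ρsp⟫ = ass
  generalize ⟪ρsp, ρ1⟫ = as1
  field_simp [hA, hC]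
  ring
end
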